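/- Fix a real ρ > 0 and an integer n ≥ 2. Define the ring freshness values by the backward recursion F(n) = 1/(1+ρ) and F(j) = (j/n + F(j+1)) / (1 + ρ + j/n) for j = 1, …, n−1, and define a_i = (i/n)·∏_{j=1}^{i} 1/(1 + ρ + j/n) for 1 ≤ i ≤ n−1. Then F(1) = ∑_{i=1}^{n−1} a_i + (n/(n−1))·a_{n−1}·F(n). -/

import Mathlib

open Finset in
/-- Explicit solution of the ring-network freshness recursion:
with `F n = 1/(1+ρ)` and `F j = (j/n + F (j+1)) / (1 + ρ + j/n)` for
`1 ≤ j ≤ n-1`, and `a i = (i/n) ∏_{j=1}^{i} 1/(1+ρ+j/n)`, one has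
`F 1 = ∑_{i=1}^{n-1} a i + (n/(n-1)) * a (n-1) * F n`. -/
theorem ring_freshness_explicit_solution
    (ρ : ℝ) (hρ : 0 < ρ) (n : ℕ) (hn : 2 ≤ n)
    (F : ℕ → ℝ)
    (hFn : F n = 1 / (1 + ρ))
    (hFrec : ∀ j : ℕ, 1 ≤ j → j ≤ n - 1 →
      F j = ((j : ℝ) / n + F (j + 1)) / (1 + ρ + (j : ℝ) / n))
    (a : ℕ → ℝ)
    (ha : ∀ i : ℕ, 1 ≤ i → i ≤ n - 1 →
      a i = ((i : ℝ) / n) * ∏ j ∈ Icc 1 i, 1 / (1 + ρ + (j : ℝ) / n)) :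
    F 1 = (∑ i ∈ Icc 1 (n - 1), a i) + ((n : ℝ) / ((n : ℝ) - 1)) * a (n - 1) * F n := by
  have hnpos : (0 : ℝ) < n := by positivity
  have hden : ∀ j : ℕ, (0 : ℝ) < 1 + ρ + (j : ℝ) / n := by
    intro j
    have : (0 : ℝ) ≤ (j : ℝ) / n := by positivity
    linarith
  have key : ∀ k : ℕ, 1 ≤ k → k ≤ n - 1 →
      F 1 = (∑ i ∈ Icc 1 k, a i) +
        (∏ j ∈ Icc 1 k, 1 / (1 + ρ + (j : ℝ) / n)) * F (k + 1) := by
    intro k hk1 hk2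
    induction k with
    | zero => omega
    | succ k ih =>
      rcases Nat.eq_zero_or_pos k with hk0 | hkpos
      · subst hk0
        simp only [Icc_self, sum_singleton, prod_singleton]
        rw [hFrec 1 le_rfl (by omega), ha 1 le_rfl (by omega)]
        simp only [Icc_self, prod_singleton]
        have h := hden 1
        push_cast
        field_simp
      · have hk' : k ≤ n - 1 := by omega
        have := ih hkpos hk'
        rw [Finset.sum_Icc_succ_top (by omega : 1 ≤ k + 1),
            Finset.prod_Icc_succ_top (by omega : 1 ≤ k + 1)]
        rw [this, hFrec (k + 1) (by omega) hk2,
            ha (k + 1) (by omega) hk2]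
        rw [Finset.prod_Icc_succ_top (by omega : 1 ≤ k + 1)]
        have h := hden (k + 1)
        field_simp
        ring
  have hfin := key (n - 1) (by omega) le_rfl
  have hsucc : n - 1 + 1 = n := by omega
  rw [hsucc] at hfin
  rw [hfin]
  have ha' := ha (n - 1) (by omega) le_rfl
  have hne : ((n : ℝ) - 1) ≠ 0 := by
    have : (2 : ℝ) ≤ (n : ℝ) := by exact_mod_cast hn
    linarith
  have hcast : ((n - 1 : ℕ) : ℝ) = (n : ℝ) - 1 := by
    have : (1 : ℕ) ≤ n := by omega
    push_cast [Nat.cast_sub this]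
    ring
  rw [hcast] at ha'
  rw [ha']
  field_simp
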